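/- Every contiguous subsequence (infix) of a valid token sequence is itself a valid token sequence; in particular, every prefix and every suffix of a valid token sequence is valid. -/

import Mathlib

set_option linter.unusedSectionVars false


/-!
Formalization of a BPE tokenizer with an ordered merge list.

* `σ` is the (finite) byte alphabet, `τ` is the (finite) vocabulary of tokens.
* `base` embeds each byte as a distinct base token.
* `dec` decodes a single token to a byte string; it is extended to token
  sequences by concatenation (`decodeSeq`).
* `merges` is the ordered merge list; each merge `(l, r, n)` replaces an
  adjacent pair `(l, r)` by the single token `n`, and satisfies
  `dec n = dec l ++ dec r`.
* `encode` turns a byte string into its base tokens and then, processing the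
  merges in order, repeatedly replaces the leftmost adjacent occurrence of
  `(l, r)` by `n` until no occurrence remains, before moving to the next merge.
-/

structure BPE (σ τ : Type*) where
  base : σ → τ
  dec : τ → List σ
  merges : List (τ × τ × τ)
  base_inj : Function.Injective base
  dec_base : ∀ b, dec (base b) = [b]
  dec_merge : ∀ m ∈ merges, dec m.2.2 = dec m.1 ++ dec m.2.1

namespace BPE

variable {σ τ : Type*} [DecidableEq τ]

/-- Decode a token sequence by concatenating the decodings of its tokens. -/
def decodeSeq (B : BPE σ τ) (T : List τ) : List σ := (T.map B.dec).flatten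

/-- Replace the leftmost adjacent occurrence of `(l, r)` by `n`, if any,
also returning the starting byte position of the replaced pair. -/
def replaceLeftmost (B : BPE σ τ) (l r n : τ) : List τ → Option (ℕ × List τ)
  | [] => none
  | [_] => none
  | t :: u :: rest =>
      if t = l ∧ u = r then some (0, n :: rest)
      else (B.replaceLeftmost l r n (u :: rest)).map
        (fun p => (p.1 + (B.dec t).length, t :: p.2))

/-- Repeatedly replace the leftmost adjacent occurrence of `(l, r)` by `n`
until no occurrence remains (the fuel, taken to be the length of the list,
suffices since every replacement shortens the list).  Also returns the list
of byte positions at which replacements were performed, in order. -/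
def runMerge (B : BPE σ τ) (l r n : τ) : ℕ → List τ → List τ × List ℕ
  | 0, T => (T, [])
  | fuel + 1, T =>
    match B.replaceLeftmost l r n T with
    | none => (T, [])
    | some (p, T') =>
      let q := B.runMerge l r n fuel T'
      (q.1, p :: q.2)

/-- Process an (indexed) list of merges in order, starting from token sequence
`T`; returns the final token sequence together with the ordered list of merge
applications performed, each recorded as a pair
(index of the merge in the merge list, starting byte position). -/
def encodeRunAux (B : BPE σ τ) : List (ℕ × τ × τ × τ) → List τ → List τ × List (ℕ × ℕ)
  | [], T => (T, [])
  | (i, l, r, n) :: ms, T =>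
    let q := B.runMerge l r n T.length T
    let q' := B.encodeRunAux ms q.1
    (q'.1, q.2.map (fun p => (i, p)) ++ q'.2)

/-- The full run of the BPE encoder on a byte string `S`: the final token
sequence together with the ordered list of merge applications performed. -/
def encodeRun (B : BPE σ τ) (S : List σ) : List τ × List (ℕ × ℕ) :=
  B.encodeRunAux (B.merges.zipIdx.map Prod.swap) (S.map B.base)

/-- BPE encoding of a byte string. -/
def encode (B : BPE σ τ) (S : List σ) : List τ := (B.encodeRun S).1

/-- The ordered list of merge applications (merge index, starting byte
position) performed during the run of `encode` on `S`. -/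
def encodeApps (B : BPE σ τ) (S : List σ) : List (ℕ × ℕ) := (B.encodeRun S).2

/-- A token sequence is *valid* if it is the canonical encoding of the byte
string it decodes to. -/
def Valid (B : BPE σ τ) (T : List τ) : Prop := B.encode (B.decodeSeq T) = T

/-- The merge list is in *normal form*:
(i) each token is produced by at most one merge;
(ii) every token `t` satisfies `encode (dec t) = [t]`;
(iii) every merge occurs later in the merge list than the merges producing
each of its two input tokens. -/
def NormalForm (B : BPE σ τ) : Prop :=
  (∀ i j (hi : i < B.merges.length) (hj : j < B.merges.length),
      (B.merges[i]'hi).2.2 = (B.merges[j]'hj).2.2 → i = j) ∧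
  (∀ t : τ, B.encode (B.dec t) = [t]) ∧
  (∀ i j (hi : i < B.merges.length) (hj : j < B.merges.length),
      (B.merges[i]'hi).2.2 = (B.merges[j]'hj).1 ∨
        (B.merges[i]'hi).2.2 = (B.merges[j]'hj).2.1 → i < j)

/-- The merge application `app = (t, p)` *crosses* byte position `c` if the
token it creates (the output of merge `t`, starting at byte position `p`)
has a byte span properly containing `c`. -/
def AppCrosses (B : BPE σ τ) (app : ℕ × ℕ) (c : ℕ) : Prop :=
  ∃ h : app.1 < B.merges.length,
    app.2 < c ∧ c < app.2 + (B.dec (B.merges[app.1]'h).2.2).length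

/-- Some merge applied during the run of `encode` on `S` crosses position `c`. -/
def MergeCrossesInRun (B : BPE σ τ) (S : List σ) (c : ℕ) : Prop :=
  ∃ app ∈ B.encodeApps S, B.AppCrosses app c

/-- The token sequence `U` contains a token whose byte span properly
contains position `c`. -/
def TokenCrosses (B : BPE σ τ) (U : List τ) (c : ℕ) : Prop :=
  ∃ k, k < U.length ∧
    (B.decodeSeq (U.take k)).length < c ∧ c < (B.decodeSeq (U.take (k + 1))).length

end BPE
namespace BPE

variable {σ τ : Type*} [DecidableEq τ]

/-- The *Valid Covering Tree* of a byte string `P`: the set of all nonempty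
token sequences `T = [t₁, …, tₙ]` such that (1) `P` is a prefix of
`decode T`, (2) `decode [t₁, …, t_{n-1}]` is a prefix of `P`, and
(3) `T` is valid. -/
def VCT (B : BPE σ τ) (P : List σ) : Set (List τ) :=
  {T | T ≠ [] ∧ P <+: B.decodeSeq T ∧ B.decodeSeq T.dropLast <+: P ∧ B.Valid T}

/-- The maximal prefix of a token sequence whose total decoded length is at
most `k`, i.e. the tokens whose byte spans end at or before position `k`
(together with their spans, which are determined by the preceding tokens). -/
def spanPrefix (B : BPE σ τ) (k : ℕ) : List τ → List τ
  | [] => []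
  | t :: T =>
      if (B.dec t).length ≤ k then t :: B.spanPrefix (k - (B.dec t).length) T
      else []

/-- `L₀` is a *lookahead bound* for the tokenizer if whenever two byte strings
agree on their first `k + L₀` bytes, the tokens of their encodings whose byte
spans end at or before position `k` coincide (with identical spans). -/
def LookaheadBound (B : BPE σ τ) (L₀ : ℕ) : Prop :=
  ∀ (x x' : List σ) (k : ℕ), x.take (k + L₀) = x'.take (k + L₀) →
    B.spanPrefix k (B.encode x) = B.spanPrefix k (B.encode x')

/-- `U'` is the minimal covering prefix of `U` with respect to `P`: the
shortest prefix of `U` whose decoding has `P` as a prefix. -/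
def IsMinCover (B : BPE σ τ) (P : List σ) (U U' : List τ) : Prop :=
  U' <+: U ∧ P <+: B.decodeSeq U' ∧
    ∀ U'' : List τ, U'' <+: U → P <+: B.decodeSeq U'' → U'.length ≤ U''.length

/-- The pair `(l, r)` occurs adjacently in `T`. -/
def PairAdj (l r : τ) (T : List τ) : Prop := ∃ A C, T = A ++ l :: r :: C

/-- The merge application `a = (t, i)` (merge index `t`, starting byte
position `i` of the left token) is applicable to the token sequence `T`. -/
def Applicable (B : BPE σ τ) (a : ℕ × ℕ) (T : List τ) : Prop :=
  ∃ h : a.1 < B.merges.length, ∃ A C : List τ,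
    T = A ++ (B.merges[a.1]'h).1 :: (B.merges[a.1]'h).2.1 :: C ∧
      (B.decodeSeq A).length = a.2

/-- `T'` is obtained from `T` by performing the merge application `a = (t, i)`:
the input pair of merge `t`, occurring adjacently in `T` with the left token
starting at byte position `i`, is replaced by the output token of merge `t`. -/
def ApplyApp (B : BPE σ τ) (a : ℕ × ℕ) (T T' : List τ) : Prop :=
  ∃ h : a.1 < B.merges.length, ∃ A C : List τ,
    T = A ++ (B.merges[a.1]'h).1 :: (B.merges[a.1]'h).2.1 :: C ∧
      (B.decodeSeq A).length = a.2 ∧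
      T' = A ++ (B.merges[a.1]'h).2.2 :: C

/-- Lexicographic order on merge applications `(t, i)`. -/
def appLE (a a' : ℕ × ℕ) : Prop :=
  a.1 < a'.1 ∨ (a.1 = a'.1 ∧ a.2 ≤ a'.2)

/-- `GreedyChain B T₀ apps T` holds when the sequence of merge applications
`apps` leads from token sequence `T₀` to token sequence `T`, and each applied
application is lexicographically least among those applicable to the current
token sequence. -/
inductive GreedyChain (B : BPE σ τ) : List τ → List (ℕ × ℕ) → List τ → Prop
  | nil (T : List τ) : GreedyChain B T [] T
  | cons {T T' Tf : List τ} {a : ℕ × ℕ} {apps : List (ℕ × ℕ)} :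
      B.ApplyApp a T T' →
      (∀ a', B.Applicable a' T → appLE a a') →
      GreedyChain B T' apps Tf →
      GreedyChain B T (a :: apps) Tf

end BPE
namespace BPE

variable {σ τ : Type*} [DecidableEq τ]

/- ### Basic lemmas about `decodeSeq` -/

lemma decodeSeq_nil (B : BPE σ τ) : B.decodeSeq ([] : List τ) = [] := rfl

lemma decodeSeq_cons (B : BPE σ τ) (t : τ) (T : List τ) :
    B.decodeSeq (t :: T) = B.dec t ++ B.decodeSeq T := by
  simp [decodeSeq]

lemma decodeSeq_append (B : BPE σ τ) (T U : List τ) :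
    B.decodeSeq (T ++ U) = B.decodeSeq T ++ B.decodeSeq U := by
  simp [decodeSeq]

lemma decodeSeq_prefix (B : BPE σ τ) {T U : List τ} (h : T <+: U) :
    B.decodeSeq T <+: B.decodeSeq U := by
  obtain ⟨d, rfl⟩ := h
  exact ⟨B.decodeSeq d, (B.decodeSeq_append T d).symm⟩

lemma decodeSeq_map_base (B : BPE σ τ) (S : List σ) :
    B.decodeSeq (S.map B.base) = S := by
  induction S with
  | nil => rfl
  | cons b S ih => simp [decodeSeq_cons, B.dec_base, ih]

/- ### A list-only version of `replaceLeftmost` -/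

/-- `replaceLeftmost`, forgetting the position. -/
def rl (B : BPE σ τ) (l r n : τ) (T : List τ) : Option (List τ) :=
  (B.replaceLeftmost l r n T).map (·.2)

lemma rl_nil (B : BPE σ τ) (l r n : τ) : B.rl l r n [] = none := rfl

lemma rl_single (B : BPE σ τ) (l r n t : τ) : B.rl l r n [t] = none := rfl

lemma rl_cons (B : BPE σ τ) (l r n t u : τ) (rest : List τ) :
    B.rl l r n (t :: u :: rest) =
      if t = l ∧ u = r then some (n :: rest)
      else (B.rl l r n (u :: rest)).map (t :: ·) := by
  simp only [rl, replaceLeftmost]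
  split
  · rfl
  · cases h : B.replaceLeftmost l r n (u :: rest) <;> simp [h]

lemma rl_length (B : BPE σ τ) (l r n : τ) :
    ∀ (T T' : List τ), B.rl l r n T = some T' → T'.length + 1 = T.length
  | [], _, h => by simp [rl_nil] at h
  | [t], _, h => by simp [rl_single] at h
  | t :: u :: rest, T', h => by
    rw [rl_cons] at h
    split at h
    · cases h; simp
    · cases h' : B.rl l r n (u :: rest) with
      | none => rw [h'] at h; simp at h
      | some V =>
        rw [h'] at h
        simp only [Option.map_some, Option.some.injEq] at h
        subst h
        have := B.rl_length l r n (u :: rest) V h'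
        simp at this ⊢
        omega

lemma decodeSeq_rl (B : BPE σ τ) {l r n : τ} (hd : B.dec n = B.dec l ++ B.dec r) :
    ∀ (T T' : List τ), B.rl l r n T = some T' → B.decodeSeq T' = B.decodeSeq T
  | [], _, h => by simp [rl_nil] at h
  | [t], _, h => by simp [rl_single] at h
  | t :: u :: rest, T', h => by
    rw [rl_cons] at h
    split at h
    · rename_i ht
      cases h
      simp [decodeSeq_cons, hd, ht.1, ht.2]
    · cases h' : B.rl l r n (u :: rest) with
      | none => rw [h'] at h; simp at h
      | some V =>
        rw [h'] at h
        simp only [Option.map_some, Option.some.injEq] at h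
        subst h
        have := B.decodeSeq_rl hd (u :: rest) V h'
        simp [decodeSeq_cons, this]

lemma pos_rl (B : BPE σ τ) {l r n : τ} (hd : B.dec n = B.dec l ++ B.dec r) :
    ∀ (T T' : List τ), B.rl l r n T = some T' →
      (∀ t ∈ T, 1 ≤ (B.dec t).length) → ∀ t ∈ T', 1 ≤ (B.dec t).length
  | [], _, h => by simp [rl_nil] at h
  | [t], _, h => by simp [rl_single] at h
  | t :: u :: rest, T', h => by
    intro hp
    rw [rl_cons] at h
    split at h
    · rename_i ht
      cases h
      intro s hs
      rcases List.mem_cons.mp hs with rfl | hs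
      · have hl : 1 ≤ (B.dec l).length := ht.1 ▸ hp t (by simp)
        rw [hd]; simp; omega
      · exact hp s (by simp [hs])
    · cases h' : B.rl l r n (u :: rest) with
      | none => rw [h'] at h; simp at h
      | some V =>
        rw [h'] at h
        simp only [Option.map_some, Option.some.injEq] at h
        subst h
        intro s hs
        rcases List.mem_cons.mp hs with rfl | hs
        · exact hp s (by simp)
        · exact B.pos_rl hd (u :: rest) V h' (fun x hx => hp x (by simp [List.mem_cons.mp hx])) s hs

/- ### Boundary positions -/

/-- `c` is a token-boundary byte position of `T`. -/
def Bnd (B : BPE σ τ) (c : ℕ) (T : List τ) : Prop :=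
  ∃ k, (B.decodeSeq (T.take k)).length = c

lemma bnd_zero (B : BPE σ τ) (T : List τ) : B.Bnd 0 T := ⟨0, rfl⟩

lemma bnd_cons (B : BPE σ τ) {c : ℕ} {T : List τ} (t : τ) (h : B.Bnd c T) :
    B.Bnd ((B.dec t).length + c) (t :: T) := by
  obtain ⟨k, hk⟩ := h
  exact ⟨k + 1, by simp [decodeSeq_cons, hk]⟩

lemma bnd_cons_elim (B : BPE σ τ) {c : ℕ} {t : τ} {T : List τ} (h : B.Bnd c (t :: T)) :
    c = 0 ∨ ∃ c', c = (B.dec t).length + c' ∧ B.Bnd c' T := by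
  obtain ⟨k, hk⟩ := h
  cases k with
  | zero => left; simpa [decodeSeq_nil] using hk.symm
  | succ k =>
    right
    refine ⟨(B.decodeSeq (T.take k)).length, ?_, ⟨k, rfl⟩⟩
    simp [decodeSeq_cons] at hk
    omega

lemma bnd_rl (B : BPE σ τ) {l r n : τ} (hd : B.dec n = B.dec l ++ B.dec r) :
    ∀ (T T' : List τ), B.rl l r n T = some T' → ∀ c, B.Bnd c T' → B.Bnd c T
  | [], _, h => by simp [rl_nil] at h
  | [t], _, h => by simp [rl_single] at h
  | t :: u :: rest, T', h => by
    rw [rl_cons] at h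
    split at h
    · rename_i ht
      cases h
      intro c hc
      rcases B.bnd_cons_elim hc with rfl | ⟨c', rfl, hc'⟩
      · exact B.bnd_zero _
      · have := B.bnd_cons t (B.bnd_cons u hc')
        rw [ht.1, ht.2] at this ⊢
        rw [hd]
        simpa [Nat.add_assoc] using this
    · cases h' : B.rl l r n (u :: rest) with
      | none => rw [h'] at h; simp at h
      | some V =>
        rw [h'] at h
        simp only [Option.map_some, Option.some.injEq] at h
        subst h
        intro c hc
        rcases B.bnd_cons_elim hc with rfl | ⟨c', rfl, hc'⟩
        · exact B.bnd_zero _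
        · exact B.bnd_cons t (B.bnd_rl hd (u :: rest) V h' c' hc')

/- ### Fuel-free fixpoint of the merge loop -/

def mergeFixF (B : BPE σ τ) (l r n : τ) : ℕ → List τ → List τ
  | 0, T => T
  | fuel + 1, T =>
    match B.rl l r n T with
    | none => T
    | some T' => B.mergeFixF l r n fuel T'

def mergeFix (B : BPE σ τ) (l r n : τ) (T : List τ) : List τ :=
  B.mergeFixF l r n T.length T

lemma mergeFixF_congr (B : BPE σ τ) (l r n : τ) :
    ∀ (fuel fuel' : ℕ) (T : List τ), T.length ≤ fuel → T.length ≤ fuel' →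
      B.mergeFixF l r n fuel T = B.mergeFixF l r n fuel' T := by
  intro fuel
  induction fuel with
  | zero =>
    intro fuel' T hT _
    have : T = [] := List.length_eq_zero_iff.mp (Nat.le_zero.mp hT)
    subst this
    cases fuel' with
    | zero => rfl
    | succ f => simp [mergeFixF, rl_nil]
  | succ fuel ih =>
    intro fuel' T hT hT'
    cases fuel' with
    | zero =>
      have : T = [] := List.length_eq_zero_iff.mp (Nat.le_zero.mp hT')
      subst this
      simp [mergeFixF, rl_nil]
    | succ f =>
      simp only [mergeFixF]
      cases h : B.rl l r n T with
      | none => rfl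
      | some T' =>
        have hl := B.rl_length l r n T T' h
        exact ih f T' (by omega) (by omega)

lemma mergeFix_eq (B : BPE σ τ) (l r n : τ) (T : List τ) :
    B.mergeFix l r n T =
      match B.rl l r n T with
      | none => T
      | some T' => B.mergeFix l r n T' := by
  cases h : B.rl l r n T with
  | none =>
    cases T with
    | nil => rfl
    | cons t T => simp only [mergeFix, List.length_cons, mergeFixF, h]
  | some T' =>
    have hl := B.rl_length l r n T T' h
    cases T with
    | nil => simp [rl_nil] at h
    | cons t T =>
      simp only [mergeFix, List.length_cons, mergeFixF, h]
      exact B.mergeFixF_congr l r n (t :: T).length.pred T'.length T' (by simp at hl ⊢; omega) le_rfl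

lemma decodeSeq_mergeFix (B : BPE σ τ) {l r n : τ} (hd : B.dec n = B.dec l ++ B.dec r) :
    ∀ (N : ℕ) (T : List τ), T.length ≤ N →
      B.decodeSeq (B.mergeFix l r n T) = B.decodeSeq T := by
  intro N
  induction N with
  | zero =>
    intro T hT
    have : T = [] := List.length_eq_zero_iff.mp (Nat.le_zero.mp hT)
    subst this
    rw [mergeFix_eq, rl_nil]
  | succ N ih =>
    intro T hT
    rw [mergeFix_eq]
    cases h : B.rl l r n T with
    | none => rfl
    | some T' =>
      have hl := B.rl_length l r n T T' h
      rw [ih T' (by omega)]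
      exact B.decodeSeq_rl hd T T' h

lemma pos_mergeFix (B : BPE σ τ) {l r n : τ} (hd : B.dec n = B.dec l ++ B.dec r) :
    ∀ (N : ℕ) (T : List τ), T.length ≤ N → (∀ t ∈ T, 1 ≤ (B.dec t).length) →
      ∀ t ∈ B.mergeFix l r n T, 1 ≤ (B.dec t).length := by
  intro N
  induction N with
  | zero =>
    intro T hT hp
    have : T = [] := List.length_eq_zero_iff.mp (Nat.le_zero.mp hT)
    subst this
    rw [mergeFix_eq, rl_nil]
    exact hp
  | succ N ih =>
    intro T hT hp
    rw [mergeFix_eq]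
    cases h : B.rl l r n T with
    | none => exact hp
    | some T' =>
      have hl := B.rl_length l r n T T' h
      exact ih T' (by omega) (B.pos_rl hd T T' h hp)

lemma bnd_mergeFix (B : BPE σ τ) {l r n : τ} (hd : B.dec n = B.dec l ++ B.dec r) :
    ∀ (N : ℕ) (T : List τ), T.length ≤ N → ∀ c, B.Bnd c (B.mergeFix l r n T) → B.Bnd c T := by
  intro N
  induction N with
  | zero =>
    intro T hT c
    have : T = [] := List.length_eq_zero_iff.mp (Nat.le_zero.mp hT)
    subst this
    rw [mergeFix_eq, rl_nil]
    exact id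
  | succ N ih =>
    intro T hT c
    rw [mergeFix_eq]
    cases h : B.rl l r n T with
    | none => exact id
    | some T' =>
      have hl := B.rl_length l r n T T' h
      intro hc
      exact B.bnd_rl hd T T' h c (ih T' (by omega) c hc)

/- ### The merge-list loop, fuel-free -/

def encAux (B : BPE σ τ) : List (τ × τ × τ) → List τ → List τ
  | [], T => T
  | (l, r, n) :: ms, T => B.encAux ms (B.mergeFix l r n T)

lemma decodeSeq_encAux (B : BPE σ τ) :
    ∀ (ms : List (τ × τ × τ)), (∀ m ∈ ms, B.dec m.2.2 = B.dec m.1 ++ B.dec m.2.1) →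
      ∀ T, B.decodeSeq (B.encAux ms T) = B.decodeSeq T
  | [], _, T => rfl
  | (l, r, n) :: ms, hms, T => by
    have hd : B.dec n = B.dec l ++ B.dec r := hms (l, r, n) (by simp)
    rw [encAux, B.decodeSeq_encAux ms (fun m hm => hms m (by simp [hm])),
      B.decodeSeq_mergeFix hd T.length T le_rfl]

lemma pos_encAux (B : BPE σ τ) :
    ∀ (ms : List (τ × τ × τ)), (∀ m ∈ ms, B.dec m.2.2 = B.dec m.1 ++ B.dec m.2.1) →
      ∀ T, (∀ t ∈ T, 1 ≤ (B.dec t).length) → ∀ t ∈ B.encAux ms T, 1 ≤ (B.dec t).length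
  | [], _, T => fun h => h
  | (l, r, n) :: ms, hms, T => fun h => by
    have hd : B.dec n = B.dec l ++ B.dec r := hms (l, r, n) (by simp)
    exact B.pos_encAux ms (fun m hm => hms m (by simp [hm])) _
      (B.pos_mergeFix hd T.length T le_rfl h)

lemma bnd_encAux (B : BPE σ τ) :
    ∀ (ms : List (τ × τ × τ)), (∀ m ∈ ms, B.dec m.2.2 = B.dec m.1 ++ B.dec m.2.1) →
      ∀ T c, B.Bnd c (B.encAux ms T) → B.Bnd c T
  | [], _, T, c => id
  | (l, r, n) :: ms, hms, T, c => fun h => by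
    have hd : B.dec n = B.dec l ++ B.dec r := hms (l, r, n) (by simp)
    exact B.bnd_mergeFix hd T.length T le_rfl c
      (B.bnd_encAux ms (fun m hm => hms m (by simp [hm])) _ c h)

/- ### Relating the fuel-free functions to `encode` -/

lemma runMerge_fst (B : BPE σ τ) (l r n : τ) :
    ∀ (fuel : ℕ) (T : List τ), (B.runMerge l r n fuel T).1 = B.mergeFixF l r n fuel T
  | 0, T => rfl
  | fuel + 1, T => by
    simp only [runMerge, mergeFixF, rl]
    cases h : B.replaceLeftmost l r n T with
    | none => rfl
    | some q => simpa using B.runMerge_fst l r n fuel q.2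

lemma encodeRunAux_fst (B : BPE σ τ) :
    ∀ (ml : List (ℕ × τ × τ × τ)) (T : List τ),
      (B.encodeRunAux ml T).1 = B.encAux (ml.map (·.2)) T
  | [], T => rfl
  | (i, l, r, n) :: ms, T => by
    simp only [encodeRunAux, List.map_cons, encAux]
    rw [B.encodeRunAux_fst ms, B.runMerge_fst, mergeFix]

lemma encode_eq (B : BPE σ τ) (S : List σ) :
    B.encode S = B.encAux B.merges (S.map B.base) := by
  rw [encode, encodeRun, encodeRunAux_fst]
  congr 1
  rw [List.map_map]
  exact List.zipIdx_map_fst 0 B.merges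

lemma decodeSeq_encode (B : BPE σ τ) (S : List σ) : B.decodeSeq (B.encode S) = S := by
  rw [encode_eq, B.decodeSeq_encAux B.merges B.dec_merge, decodeSeq_map_base]

lemma pos_encode (B : BPE σ τ) (S : List σ) :
    ∀ t ∈ B.encode S, 1 ≤ (B.dec t).length := by
  rw [encode_eq]
  apply B.pos_encAux B.merges B.dec_merge
  intro t ht
  obtain ⟨b, -, rfl⟩ := List.mem_map.mp ht
  simp [B.dec_base]

/- ### Decomposition of `rl` on an append -/

lemma rl_append_none (B : BPE σ τ) (l r n : τ) :
    ∀ (L R : List τ), B.rl l r n (L ++ R) = none →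
      B.rl l r n L = none ∧ B.rl l r n R = none := by
  intro L
  induction L with
  | nil => intro R h; exact ⟨rl_nil B l r n, h⟩
  | cons t L ih =>
    intro R h
    cases L with
    | nil =>
      refine ⟨rl_single B l r n t, ?_⟩
      cases R with
      | nil => exact rl_nil B l r n
      | cons u R₂ =>
        simp only [List.singleton_append, rl_cons] at h
        split at h
        · simp at h
        · exact Option.map_eq_none_iff.mp h
    | cons v L₂ =>
      simp only [List.cons_append, rl_cons] at h
      split at h
      · simp at h
      · rename_i hne
        cases h' : B.rl l r n (v :: (L₂ ++ R)) with
        | some V => rw [h'] at h; simp at h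
        | none =>
          have := ih R (by simpa using h')
          constructor
          · rw [rl_cons]
            split
            · exact absurd ‹_› hne
            · rw [this.1]; rfl
          · exact this.2

lemma rl_append_cases (B : BPE σ τ) (l r n : τ) :
    ∀ (L R U : List τ), B.rl l r n (L ++ R) = some U →
      (∃ L', B.rl l r n L = some L' ∧ U = L' ++ R) ∨
      (∃ A C, B.rl l r n L = none ∧ L = A ++ [l] ∧ R = r :: C ∧ U = A ++ n :: C) ∨
      (∃ R', B.rl l r n L = none ∧ B.rl l r n R = some R' ∧ U = L ++ R') := by
  intro L
  induction L with
  | nil =>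
    intro R U h
    exact Or.inr (Or.inr ⟨U, rl_nil B l r n, by simpa using h, by simp⟩)
  | cons t L ih =>
    intro R U h
    cases L with
    | nil =>
      cases R with
      | nil => simp [rl_single] at h
      | cons u R₂ =>
        simp only [List.singleton_append, rl_cons] at h
        split at h
        · rename_i ht
          refine Or.inr (Or.inl ⟨[], R₂, rl_single B l r n t, ?_, ?_, ?_⟩)
          · simp [ht.1]
          · simp [ht.2]
          · simpa using h.symm
        · cases h' : B.rl l r n (u :: R₂) with
          | none => rw [h'] at h; simp at h
          | some V =>
            rw [h'] at h
            simp only [Option.map_some, Option.some.injEq] at h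
            exact Or.inr (Or.inr ⟨V, rl_single B l r n t, rfl, h.symm⟩)
    | cons v L₂ =>
      simp only [List.cons_append, rl_cons] at h
      split at h
      · rename_i ht
        refine Or.inl ⟨n :: L₂, ?_, by simpa using h.symm⟩
        rw [rl_cons, if_pos ht]
      · rename_i hne
        cases h' : B.rl l r n (v :: (L₂ ++ R)) with
        | none => rw [h'] at h; simp at h
        | some V =>
          rw [h'] at h
          simp only [Option.map_some, Option.some.injEq] at h
          subst h
          rcases ih R V (by simpa using h') with
            ⟨L', hL', rfl⟩ | ⟨A, C, hnone, hL, hR, rfl⟩ | ⟨R', hnone, hR', rfl⟩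
          · refine Or.inl ⟨t :: L', ?_, by simp⟩
            rw [rl_cons, if_neg hne, hL']; rfl
          · refine Or.inr (Or.inl ⟨t :: A, C, ?_, by simp [hL], hR, by simp⟩)
            rw [rl_cons, if_neg hne, hnone]; rfl
          · refine Or.inr (Or.inr ⟨R', ?_, hR', by simp⟩)
            rw [rl_cons, if_neg hne, hnone]; rfl

/- ### Auxiliary facts about boundary positions -/

lemma decodeSeq_take_mono (B : BPE σ τ) (T : List τ) {k k' : ℕ} (h : k ≤ k') :
    (B.decodeSeq (T.take k)).length ≤ (B.decodeSeq (T.take k')).length := by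
  have h1 : T.take k = (T.take k').take k := by
    rw [List.take_take, min_eq_left h]
  rw [h1]
  exact (B.decodeSeq_prefix (List.take_prefix k (T.take k'))).length_le

lemma take_append_singleton {α : Type*} :
    ∀ (A : List α) (x : α) (C : List α), (A ++ x :: C).take (A.length + 1) = A ++ [x]
  | [], x, C => by simp
  | a :: A, x, C => by
    simp only [List.cons_append, List.length_cons, List.take_succ_cons, List.cons.injEq,
      true_and]
    exact take_append_singleton A x C
lemma not_bnd_middle (B : BPE σ τ) {l r n : τ} (hd : B.dec n = B.dec l ++ B.dec r)
    (hl : 1 ≤ (B.dec l).length) (hr : 1 ≤ (B.dec r).length) (A C : List τ) :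
    ¬ B.Bnd ((B.decodeSeq A).length + (B.dec l).length) (A ++ n :: C) := by
  rintro ⟨k, hk⟩
  rcases le_or_gt k A.length with hkA | hkA
  · have h1 := B.decodeSeq_take_mono (A ++ n :: C) hkA
    rw [hk, List.take_left] at h1
    omega
  · have h2 := B.decodeSeq_take_mono (A ++ n :: C) (Nat.succ_le_of_lt hkA)
    rw [hk, take_append_singleton, decodeSeq_append] at h2
    simp only [List.length_append, decodeSeq_cons, decodeSeq_nil, List.append_nil, hd] at h2
    omega

/- ### The key splitting lemma -/

lemma mergeFix_append (B : BPE σ τ) {l r n : τ} (hd : B.dec n = B.dec l ++ B.dec r) :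
    ∀ (N : ℕ) (L R : List τ), L.length + R.length ≤ N →
      (∀ t ∈ L, 1 ≤ (B.dec t).length) → (∀ t ∈ R, 1 ≤ (B.dec t).length) →
      B.Bnd (B.decodeSeq L).length (B.mergeFix l r n (L ++ R)) →
      B.mergeFix l r n (L ++ R) = B.mergeFix l r n L ++ B.mergeFix l r n R := by
  intro N
  induction N with
  | zero =>
    intro L R hN _ _ _
    have hL : L = [] := List.length_eq_zero_iff.mp (by omega)
    have hR : R = [] := List.length_eq_zero_iff.mp (by omega)
    subst hL; subst hR
    simp [mergeFix_eq, rl_nil]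
  | succ N ih =>
    intro L R hN hpL hpR hb
    cases h : B.rl l r n (L ++ R) with
    | none =>
      obtain ⟨h1, h2⟩ := B.rl_append_none l r n L R h
      rw [mergeFix_eq, h, mergeFix_eq, h1, mergeFix_eq, h2]
    | some U =>
      have hlen := B.rl_length l r n (L ++ R) U h
      have hUeq : B.mergeFix l r n (L ++ R) = B.mergeFix l r n U := by
        rw [mergeFix_eq, h]
      rcases B.rl_append_cases l r n L R U h with
        ⟨L', hL', rfl⟩ | ⟨A, C, hnone, hLA, hRC, rfl⟩ | ⟨R', hnone, hR', rfl⟩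
      · have hdL : B.decodeSeq L' = B.decodeSeq L := B.decodeSeq_rl hd L L' hL'
        have hlenL := B.rl_length l r n L L' hL'
        rw [hUeq]
        rw [ih L' R (by simp at hlen hN ⊢; omega) (B.pos_rl hd L L' hL' hpL) hpR
          (by rw [hdL]; rw [hUeq] at hb; exact hb)]
        congr 1
        rw [mergeFix_eq (T := L), hL']
      · exfalso
        subst hLA; subst hRC
        have hl1 : 1 ≤ (B.dec l).length := hpL l (by simp)
        have hr1 : 1 ≤ (B.dec r).length := hpR r (by simp)
        have hbU : B.Bnd (B.decodeSeq (A ++ [l])).length (A ++ n :: C) := by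
          rw [hUeq] at hb
          exact B.bnd_mergeFix hd (A ++ n :: C).length _ le_rfl _ hb
        rw [decodeSeq_append] at hbU
        simp only [List.length_append, decodeSeq_cons, decodeSeq_nil, List.append_nil] at hbU
        exact B.not_bnd_middle hd hl1 hr1 A C hbU
      · have hlenR := B.rl_length l r n R R' hR'
        rw [hUeq]
        rw [ih L R' (by simp at hlen hN ⊢; omega) hpL (B.pos_rl hd R R' hR' hpR)
          (by rw [hUeq] at hb; exact hb)]
        congr 1
        rw [mergeFix_eq (T := R), hR']

lemma encAux_append (B : BPE σ τ) :
    ∀ (ms : List (τ × τ × τ)), (∀ m ∈ ms, B.dec m.2.2 = B.dec m.1 ++ B.dec m.2.1) →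
    ∀ (L R : List τ),
      (∀ t ∈ L, 1 ≤ (B.dec t).length) → (∀ t ∈ R, 1 ≤ (B.dec t).length) →
      B.Bnd (B.decodeSeq L).length (B.encAux ms (L ++ R)) →
      B.encAux ms (L ++ R) = B.encAux ms L ++ B.encAux ms R := by
  intro ms
  induction ms with
  | nil => intro _ L R _ _ _; rfl
  | cons m ms ih =>
    obtain ⟨l, r, n⟩ := m
    intro hms L R hpL hpR hb
    have hd : B.dec n = B.dec l ++ B.dec r := hms (l, r, n) (by simp)
    have hms' : ∀ m ∈ ms, B.dec m.2.2 = B.dec m.1 ++ B.dec m.2.1 :=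
      fun m hm => hms m (by simp [hm])
    simp only [encAux] at hb ⊢
    have hb' : B.Bnd (B.decodeSeq L).length (B.mergeFix l r n (L ++ R)) :=
      B.bnd_encAux ms hms' _ _ hb
    have hsplit := B.mergeFix_append hd (L.length + R.length) L R le_rfl hpL hpR hb'
    rw [hsplit] at hb ⊢
    exact ih hms' _ _ (B.pos_mergeFix hd L.length L le_rfl hpL)
      (B.pos_mergeFix hd R.length R le_rfl hpR)
      (by rwa [B.decodeSeq_mergeFix hd L.length L le_rfl])

/- ### Validity of prefixes and suffixes -/

lemma append_eq_append_of_decode (B : BPE σ τ) {E₁ E₂ T₁ T₂ : List τ}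
    (h : E₁ ++ E₂ = T₁ ++ T₂)
    (hp1 : ∀ t ∈ E₁, 1 ≤ (B.dec t).length) (hp2 : ∀ t ∈ E₂, 1 ≤ (B.dec t).length)
    (hlen : (B.decodeSeq E₁).length = (B.decodeSeq T₁).length) :
    E₁ = T₁ ∧ E₂ = T₂ := by
  rcases List.append_eq_append_iff.mp h with ⟨a', ha1, ha2⟩ | ⟨c', hc1, hc2⟩
  · have hd : (B.decodeSeq T₁).length
        = (B.decodeSeq E₁).length + (B.decodeSeq a').length := by
      rw [ha1, decodeSeq_append, List.length_append]
    have ha : a' = [] := by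
      cases a' with
      | nil => rfl
      | cons t a'' =>
        have ht : 1 ≤ (B.dec t).length := hp2 t (by rw [ha2]; simp)
        rw [decodeSeq_cons, List.length_append] at hd
        omega
    subst ha
    simp only [List.append_nil] at ha1
    simp only [List.nil_append] at ha2
    exact ⟨ha1.symm, ha2⟩
  · have hd : (B.decodeSeq E₁).length
        = (B.decodeSeq T₁).length + (B.decodeSeq c').length := by
      rw [hc1, decodeSeq_append, List.length_append]
    have hc : c' = [] := by
      cases c' with
      | nil => rfl
      | cons t c'' =>
        have ht : 1 ≤ (B.dec t).length := hp1 t (by rw [hc1]; simp)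
        rw [decodeSeq_cons, List.length_append] at hd
        omega
    subst hc
    simp only [List.append_nil] at hc1
    simp only [List.nil_append] at hc2
    exact ⟨hc1, hc2.symm⟩

lemma valid_append (B : BPE σ τ) {T₁ T₂ : List τ} (hV : B.Valid (T₁ ++ T₂)) :
    B.Valid T₁ ∧ B.Valid T₂ := by
  have hpos : ∀ (S : List σ), ∀ t ∈ S.map B.base, 1 ≤ (B.dec t).length := by
    intro S t ht
    obtain ⟨b, -, rfl⟩ := List.mem_map.mp ht
    simp [B.dec_base]
  have hE : B.encAux B.merges
      ((B.decodeSeq T₁).map B.base ++ (B.decodeSeq T₂).map B.base) = T₁ ++ T₂ := by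
    rw [← List.map_append, ← B.encode_eq, ← B.decodeSeq_append]
    exact hV
  have hbnd : B.Bnd (B.decodeSeq ((B.decodeSeq T₁).map B.base)).length
      (B.encAux B.merges
        ((B.decodeSeq T₁).map B.base ++ (B.decodeSeq T₂).map B.base)) := by
    rw [hE, decodeSeq_map_base]
    exact ⟨T₁.length, by rw [List.take_left]⟩
  have hsplit := B.encAux_append B.merges B.dec_merge
    ((B.decodeSeq T₁).map B.base) ((B.decodeSeq T₂).map B.base)
    (hpos _) (hpos _) hbnd
  rw [hE, ← B.encode_eq, ← B.encode_eq] at hsplit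
  have hkey := B.append_eq_append_of_decode hsplit.symm
    (B.pos_encode _) (B.pos_encode _)
    (by rw [B.decodeSeq_encode])
  exact ⟨hkey.1, hkey.2⟩

end BPE

/-- Every contiguous subsequence (infix) of a valid token sequence is itself a
valid token sequence; in particular, every prefix and every suffix of a valid
token sequence is valid. -/
theorem BPE.valid_of_infix {σ τ : Type*} [DecidableEq τ]
    (B : BPE σ τ) (hNF : B.NormalForm) :
    (∀ T T' : List τ, T' <:+: T → B.Valid T → B.Valid T') ∧
      (∀ T T' : List τ, T' <+: T → B.Valid T → B.Valid T') ∧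
      (∀ T T' : List τ, T' <:+ T → B.Valid T → B.Valid T') := by
  have hinf : ∀ T T' : List τ, T' <:+: T → B.Valid T → B.Valid T' := by
    rintro T T' ⟨A, C, rfl⟩ hV
    rw [List.append_assoc] at hV
    exact (B.valid_append (B.valid_append hV).2).1
  exact ⟨hinf, fun T T' h => hinf T T' h.isInfix, fun T T' h => hinf T T' h.isInfix⟩
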